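/- arXiv:1801.08499 — 3 statements merged into one kernel-verified Lean document; each statement's English description precedes it below -/
import Mathlib

section
/- Let $f:[-1,1]^d \to \mathbb{R}$ be of the form $f = \mu + \sum_{p \in S_1} \phi_p(x_p) + \sum_{\mathbf{j} = (j_1,j_2) \in S_2} \phi_{\mathbf{j}}(x_{j_1},x_{j_2}) + \sum_{l \in S_2^{(1)}} \phi_l(x_l)$, where each bivariate component satisfies $\phi_{\mathbf{j}}(x_{j_1},x_{j_2}) = 0$ whenever $x_{j_1}=0$ or $x_{j_2}=0$. Fix a map $h:[d]\to\{1,2\}$ with induced partition $\mathcal{A}_1, \mathcal{A}_2$, a vector $\boldsymbol{\beta} \in \{-1,1\}^d$, and $\mathbf{x} \in [-1,1]^d$. Define four points $\mathbf{x}_1,\mathbf{x}_2,\mathbf{x}_3,\mathbf{x}_4$ where the $i$-th coordinate of each point equals $x_i$ or $0$ depending on the indicator of $\beta_i$ or $-\beta_i$ as in the bivariate sampling construction. Then $f(\mathbf{x}_1) - f(\mathbf{x}_2) - f(\mathbf{x}_3) + f(\mathbf{x}_4) = \sum_{\mathbf{j} \in \mathcal{A} \cap S_2} \beta_{j_1}\beta_{j_2}\,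 \phi_{\mathbf{j}}(x_{j_1},x_{j_2})$, where $\mathcal{A}$ is the set of pairs $\mathbf{j}$ with $j_1, j_2$ in different blocks of the partition. -/
/-- Bivariate sampling lemma (Lemma 4.2): with
`f = μ + ∑_{p∈S₁} φ_p(x_p) + ∑_{j∈S₂} φ_j(x_{j₁},x_{j₂}) + ∑_{l∈S₂⁽¹⁾} ψ_l(x_l)`,
where the bivariate components vanish whenever one argument is zero, the alternating
sum of `f` over the four query points built from a partition `h : [d] → {1,2}` and a
sign vector `β` equals `∑_{j∈𝒜∩S₂} β_{j₁} β_{j₂} φ_j(x_{j₁},x_{j₂})`, where `𝒜` is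
the set of pairs separated by the partition. -/
theorem stmt5 (d : ℕ) (f : (Fin d → ℝ) → ℝ) (μ : ℝ)
    (S₁ : Finset (Fin d)) (S₂ : Finset (Fin d × Fin d)) (S₂v : Finset (Fin d))
    (φ₁ : Fin d → ℝ → ℝ) (φ₂ : Fin d × Fin d → ℝ → ℝ → ℝ) (ψ : Fin d → ℝ → ℝ)
    (hS₂v : S₂v = S₂.image Prod.fst ∪ S₂.image Prod.snd)
    (hf : ∀ y : Fin d → ℝ,
      f y = μ + ∑ p ∈ S₁, φ₁ p (y p) + ∑ j ∈ S₂, φ₂ j (y j.1) (y j.2)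
              + ∑ l ∈ S₂v, ψ l (y l))
    (hanchor : ∀ j ∈ S₂, (∀ t : ℝ, φ₂ j 0 t = 0) ∧ (∀ s : ℝ, φ₂ j s 0 = 0))
    (h : Fin d → Fin 2) (β : Fin d → ℝ) (hβ : ∀ i, β i = 1 ∨ β i = -1)
    (x : Fin d → ℝ)
    -- the four query points
    (x₁ x₂ x₃ x₄ : Fin d → ℝ)
    (hx₁ : ∀ i, x₁ i = if β i = 1 then x i else 0)
    (hx₂ : ∀ i, x₂ i = if h i = 0 then (if -β i = 1 then x i else 0)
                        else (if β i = 1 then x i else 0))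
    (hx₃ : ∀ i, x₃ i = if h i = 0 then (if β i = 1 then x i else 0)
                        else (if -β i = 1 then x i else 0))
    (hx₄ : ∀ i, x₄ i = if -β i = 1 then x i else 0) :
    f x₁ - f x₂ - f x₃ + f x₄
      = ∑ j ∈ S₂.filter (fun j => h j.1 ≠ h j.2),
          β j.1 * β j.2 * φ₂ j (x j.1) (x j.2) := by

  have keyu : ∀ (g : Fin d → ℝ → ℝ) (i : Fin d),
      g i (x₁ i) - g i (x₂ i) - g i (x₃ i) + g i (x₄ i) = 0 := by
    intro g i
    rcases Fin.exists_fin_two.mp ⟨h i, rfl⟩ with _ | _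
    all_goals rw [hx₁ i, hx₂ i, hx₃ i, hx₄ i]
    all_goals simp_all
    all_goals ring
  have key : ∀ j ∈ S₂,
      φ₂ j (x₁ j.1) (x₁ j.2) - φ₂ j (x₂ j.1) (x₂ j.2)
        - φ₂ j (x₃ j.1) (x₃ j.2) + φ₂ j (x₄ j.1) (x₄ j.2)
      = if h j.1 ≠ h j.2 then β j.1 * β j.2 * φ₂ j (x j.1) (x j.2) else 0 := by
    intro j hj
    obtain ⟨h0, h0'⟩ := hanchor j hj
    have hneg : ¬ ((-1:ℝ) = 1) := by norm_num
    rw [hx₁ j.1, hx₁ j.2, hx₂ j.1, hx₂ j.2, hx₃ j.1, hx₃ j.2, hx₄ j.1, hx₄ j.2]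
    have e1 : h j.1 = 0 ∨ h j.1 = 1 := by omega
    have e2 : h j.2 = 0 ∨ h j.2 = 1 := by omega
    rcases hβ j.1 with b1 | b1 <;> rcases hβ j.2 with b2 | b2 <;>
      rcases e1 with e1 | e1 <;> rcases e2 with e2 | e2 <;>
      simp [b1, b2, e1, e2, h0, h0', hneg] <;> ring
  calc f x₁ - f x₂ - f x₃ + f x₄
      = ∑ p ∈ S₁, (φ₁ p (x₁ p) - φ₁ p (x₂ p) - φ₁ p (x₃ p) + φ₁ p (x₄ p))
        + ∑ j ∈ S₂, (φ₂ j (x₁ j.1) (x₁ j.2) - φ₂ j (x₂ j.1) (x₂ j.2)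
            - φ₂ j (x₃ j.1) (x₃ j.2) + φ₂ j (x₄ j.1) (x₄ j.2))
        + ∑ l ∈ S₂v, (ψ l (x₁ l) - ψ l (x₂ l) - ψ l (x₃ l) + ψ l (x₄ l)) := by
        rw [hf x₁, hf x₂, hf x₃, hf x₄]
        simp only [Finset.sum_add_distrib, Finset.sum_sub_distrib]
        ring
    _ = ∑ j ∈ S₂, (if h j.1 ≠ h j.2 then β j.1 * β j.2 * φ₂ j (x j.1) (x j.2) else 0) := by
        rw [Finset.sum_congr rfl key]
        simp [keyu]
    _ = _ := by rw [Finset.sum_filter]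
end

section
/- Let $f:[-1,1]^d \to \mathbb{R}$ have the anchored additive form $f(\mathbf{x}) = \mu + \sum_{r=1}^{r_0} \sum_{\mathbf{j}} \phi_{\mathbf{j}}(\mathbf{x}_{\mathbf{j}})$ where every component of order $l \leq r_0$ vanishes whenever any of its arguments is $0$. Fix $h:[d] \to [r_0]$, $\boldsymbol{\beta} \in \{-1,1\}^d$, $\mathbf{x} \in [-1,1]^d$, and define for each $z \in [2^{r_0}]$ the point $\mathbf{x}_z$ with $(\mathbf{x}_z)_i = x_i$ if $\beta_i = (-1)^{\mathrm{digit}(z-1,h(i)-1)}$ and $0$ otherwise. Then $\sum_{z=1}^{2^{r_0}} (-1)^{s(z-1)} f(\mathbf{x}_z) = \sum_{\mathbf{j} \in \mathcal{A} \cap S_{r_0}} \beta_{j_1}\cdots\beta_{j_{r_0}}\, \phi_{\mathbf{j}}(\mathbf{x}_{\mathbf{j}})$, where $\mathcal{A}$ is the set of $r_0$-tuples on which $h$ is injective. -/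
/-- digit sum equals sum of bits below `k`, for `z < 2^k`. -/
lemma aux_digitsum : ∀ (k z : ℕ), z < 2 ^ k →
    ((Nat.digits 2 z).sum) = ∑ b ∈ Finset.range k, (z.testBit b).toNat := by
  intro k
  induction k with
  | zero =>
    intro z hz
    interval_cases z
    simp
  | succ k ih =>
    intro z hz
    rcases Nat.eq_zero_or_pos z with rfl | hz0
    · simp
    · rw [Nat.digits_def' (by norm_num : (1:ℕ) < 2) hz0, List.sum_cons,
        Finset.sum_range_succ']
      have h2 : z / 2 < 2 ^ k := by
        rw [Nat.div_lt_iff_lt_mul (by norm_num)]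
        calc z < 2 ^ (k+1) := hz
          _ = 2 ^ k * 2 := by ring
      rw [ih _ h2]
      have hbit0 : (z.testBit 0).toNat = z % 2 := by
        rw [Nat.testBit_zero]
        rcases Nat.mod_two_eq_zero_or_one z with hm | hm <;> simp [hm]
      have hbits : ∀ b, ((z/2).testBit b).toNat = (z.testBit (b+1)).toNat := by
        intro b; rw [Nat.testBit_succ]
      simp only [hbits, hbit0]
      omega

lemma aux_fin2_flip (t : Fin 2) : ((-1:ℝ))^(((1 - t : Fin 2) : ℕ)) = -(-1:ℝ)^((t : ℕ)) := by
  fin_cases t <;> norm_num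

lemma aux_fin2_flipflip (t : Fin 2) : (1 - (1 - t) : Fin 2) = t := by
  fin_cases t <;> rfl

lemma aux_fin2_flip_ne (t : Fin 2) : (1 - t : Fin 2) ≠ t := by
  fin_cases t <;> decide

lemma aux_fin2_ne_zero {t : Fin 2} (h : t ≠ 0) : t = 1 := by
  fin_cases t
  · exact absurd rfl h
  · rfl

/-- Per-component sum. -/
lemma aux_comp {d r₀ : ℕ} (U : Finset (Fin d)) (h : Fin d → Fin r₀) (β x : Fin d → ℝ)
    (hβ : ∀ i, β i = 1 ∨ β i = -1) (φU : (Fin d → ℝ) → ℝ)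
    (hdep : ∀ y z : Fin d → ℝ, (∀ i ∈ U, y i = z i) → φU y = φU z)
    (hanchor : ∀ y : Fin d → ℝ, (∃ i ∈ U, y i = 0) → φU y = 0)
    (horder : U.card ≤ r₀) :
    ∑ v : Fin r₀ → Fin 2,
        (∏ b : Fin r₀, (-1:ℝ)^((v b : ℕ)))
          * φU (fun i => if β i = (-1:ℝ)^((v (h i) : ℕ)) then x i else 0)
      = if U.card = r₀ ∧ (∀ a ∈ U, ∀ b ∈ U, h a = h b → a = b)
          then (∏ i ∈ U, β i) * φU x else 0 := by
  classical
  split_ifs with hU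
  · obtain ⟨hcard, hinj⟩ := hU
    have hinj' : Function.Injective (fun i : {i // i ∈ U} => h (i : Fin d)) := by
      intro a b hab
      exact Subtype.ext (hinj _ a.2 _ b.2 hab)
    have hbij : Function.Bijective (fun i : {i // i ∈ U} => h (i : Fin d)) := by
      rw [Fintype.bijective_iff_injective_and_card]
      exact ⟨hinj', by simp [Fintype.card_coe, hcard]⟩
    set E := Equiv.ofBijective _ hbij with hE
    set v₀ : Fin r₀ → Fin 2 := fun b => if β ((E.symm b : {i // i ∈ U}) : Fin d) = -1 then 1 else 0
      with hv₀def
    have hEapp : ∀ i : {i // i ∈ U}, E i = h (i : Fin d) := fun i => rfl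
    have hv₀ : ∀ i (hi : i ∈ U), v₀ (h i) = if β i = -1 then 1 else 0 := by
      intro i hi
      have hsymm : E.symm (h i) = ⟨i, hi⟩ := by
        rw [Equiv.symm_apply_eq]; rfl
      simp [hv₀def, hsymm]
    rw [Fintype.sum_eq_single v₀]
    · have hQ : φU (fun i => if β i = (-1:ℝ)^((v₀ (h i) : ℕ)) then x i else 0) = φU x := by
        apply hdep
        intro i hi
        have hv := hv₀ i hi
        rcases hβ i with h1 | h1
        · have hz : v₀ (h i) = 0 := by
            rw [hv, if_neg]; rw [h1]; norm_num
          rw [hz, if_pos]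
          rw [h1]; norm_num
        · have hz : v₀ (h i) = 1 := by rw [hv, if_pos h1]
          rw [hz, if_pos]
          rw [h1]; norm_num
      have hS : (∏ b : Fin r₀, (-1:ℝ)^((v₀ b : ℕ))) = ∏ i ∈ U, β i := by
        rw [← Equiv.prod_comp E (fun b => (-1:ℝ)^((v₀ b : ℕ)))]
        have : ∀ i : {i // i ∈ U}, (-1:ℝ)^((v₀ (E i) : ℕ)) = (-1:ℝ)^((v₀ (h (i : Fin d)) : ℕ)) := by
          intro i; rfl
        simp only [this]
        rw [Finset.prod_coe_sort U (fun i => (-1:ℝ)^((v₀ (h i) : ℕ)))]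
        apply Finset.prod_congr rfl
        intro i hi
        have hv := hv₀ i hi
        rcases hβ i with h1 | h1
        · have hz : v₀ (h i) = 0 := by
            rw [hv, if_neg]; rw [h1]; norm_num
          rw [hz, h1]; norm_num
        · have hz : v₀ (h i) = 1 := by rw [hv, if_pos h1]
          rw [hz, h1]; norm_num
      rw [hQ, hS]
    · intro v hv
      have : ∃ b, v b ≠ v₀ b := by
        by_contra hc; push_neg at hc; exact hv (funext hc)
      obtain ⟨b, hb⟩ := this
      set i := ((E.symm b : {i // i ∈ U}) : Fin d) with hidef
      have hiU : i ∈ U := (E.symm b).2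
      have hhi : h i = b := E.apply_symm_apply b
      have hvb : v₀ b = if β i = -1 then 1 else 0 := by rw [← hhi, hv₀ i hiU]
      have h0 : (if β i = (-1:ℝ)^((v (h i) : ℕ)) then x i else 0) = 0 := by
        rw [if_neg]
        rw [hhi]
        rcases hβ i with h1 | h1
        · have hz : v₀ b = 0 := by rw [hvb, if_neg]; rw [h1]; norm_num
          have hv1 : v b = 1 := aux_fin2_ne_zero (by rw [hz] at hb; exact hb)
          rw [hv1, h1]; norm_num
        · have hz : v₀ b = 1 := by rw [hvb, if_pos h1]
          have hv1 : v b = 0 := by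
            by_contra hc
            exact hb (by rw [aux_fin2_ne_zero hc, hz])
          rw [hv1, h1]; norm_num
      have : φU (fun i => if β i = (-1:ℝ)^((v (h i) : ℕ)) then x i else 0) = 0 :=
        hanchor _ ⟨i, hiU, h0⟩
      rw [this, mul_zero]
  · -- non-surviving components vanish
    have himg : (U.image h).card < r₀ := by
      by_contra hge
      push_neg at hge
      have hle : (U.image h).card ≤ U.card := Finset.card_image_le
      have hcard : U.card = r₀ := le_antisymm horder (le_trans hge hle)
      have himgcard : (U.image h).card = U.card := le_antisymm hle (by omega)
      have hinj := Finset.card_image_iff.mp himgcard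
      exact hU ⟨hcard, fun a ha b hb hab =>
        hinj (Finset.mem_coe.mpr ha) (Finset.mem_coe.mpr hb) hab⟩
    obtain ⟨b, hbmem⟩ : ∃ b : Fin r₀, b ∉ U.image h := by
      by_contra hc
      push_neg at hc
      have hsub : (Finset.univ : Finset (Fin r₀)) ⊆ U.image h := fun t _ => hc t
      have := Finset.card_le_card hsub
      rw [Finset.card_univ, Fintype.card_fin] at this
      omega
    apply Finset.sum_involution (fun v _ => Function.update v b (1 - v b))
    · intro v _
      have hφ : φU (fun i => if β i = (-1:ℝ)^(((Function.update v b (1 - v b)) (h i) : ℕ)) then x i else 0)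
          = φU (fun i => if β i = (-1:ℝ)^((v (h i) : ℕ)) then x i else 0) := by
        apply hdep
        intro i hi
        have hne : h i ≠ b := fun hcon => hbmem (hcon ▸ Finset.mem_image_of_mem h hi)
        rw [Function.update_of_ne hne]
      have hSflip : (∏ c : Fin r₀, (-1:ℝ)^(((Function.update v b (1 - v b)) c : ℕ)))
          = -(∏ c : Fin r₀, (-1:ℝ)^((v c : ℕ))) := by
        rw [← Finset.mul_prod_erase Finset.univ
            (fun c => (-1:ℝ)^(((Function.update v b (1 - v b)) c : ℕ))) (Finset.mem_univ b)]
        rw [← Finset.mul_prod_erase Finset.univ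
            (fun c => (-1:ℝ)^((v c : ℕ))) (Finset.mem_univ b)]
        have h1 : (Function.update v b (1 - v b)) b = 1 - v b := Function.update_self _ _ _
        have h2 : ∀ c ∈ Finset.univ.erase b,
            (-1:ℝ)^(((Function.update v b (1 - v b)) c : ℕ)) = (-1:ℝ)^((v c : ℕ)) := by
          intro c hc
          rw [Function.update_of_ne (Finset.ne_of_mem_erase hc)]
        rw [Finset.prod_congr rfl h2, h1, aux_fin2_flip]
        ring
      rw [hφ, hSflip]
      ring
    · intro v _ hT hcon
      have := congrFun hcon b
      rw [Function.update_self] at this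
      exact aux_fin2_flip_ne (v b) this
    · intro v _
      funext c
      by_cases hc : c = b
      · subst hc
        simp [Function.update_self, aux_fin2_flipflip]
      · simp [Function.update_of_ne hc]
    · intro v _; exact Finset.mem_univ _

/-- Multivariate sampling identity (Lemma 5.3).  Let
`f(x) = μ + ∑_{U ∈ F} φ_U(x_U)` be an anchored additive model whose components
have order at most `r₀`, depend only on their own variables, and vanish whenever
one of their arguments is zero.  For `h : [d] → [r₀]`, `β ∈ {-1,1}^d` and query
points `(x_z)_i = x_i` if `β_i = (-1)^{digit(z-1, h(i)-1)}` and `0` otherwise,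
`∑_{z=1}^{2^{r₀}} (-1)^{s(z-1)} f(x_z)
  = ∑_{U ∈ 𝒜 ∩ S_{r₀}} (∏_{i∈U} β_i) φ_U(x_U)`,
where `𝒜 ∩ S_{r₀}` consists of the components of exact order `r₀` on which `h`
is injective. -/
theorem stmt11 (d r₀ : ℕ) (hr₀ : 1 ≤ r₀)
    (f : (Fin d → ℝ) → ℝ) (μ : ℝ)
    (F : Finset (Finset (Fin d))) (φ : Finset (Fin d) → (Fin d → ℝ) → ℝ)
    (horder : ∀ U ∈ F, U.card ≤ r₀)
    (hdep : ∀ U ∈ F, ∀ y z : Fin d → ℝ, (∀ i ∈ U, y i = z i) → φ U y = φ U z)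
    (hanchor : ∀ U ∈ F, ∀ y : Fin d → ℝ, (∃ i ∈ U, y i = 0) → φ U y = 0)
    (hf : ∀ y : Fin d → ℝ, f y = μ + ∑ U ∈ F, φ U y)
    (h : Fin d → Fin r₀) (β : Fin d → ℝ) (hβ : ∀ i, β i = 1 ∨ β i = -1)
    (x : Fin d → ℝ) :
    ∑ z ∈ Finset.range (2 ^ r₀), (-1 : ℝ) ^ ((Nat.digits 2 z).sum)
        * f (fun i => if β i = (-1 : ℝ) ^ (Nat.testBit z (h i)).toNat then x i else 0)
      = ∑ U ∈ F.filter
            (fun U : Finset (Fin d) =>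
              U.card = r₀ ∧ ∀ a ∈ U, ∀ b ∈ U, h a = h b → a = b),
          (∏ i ∈ U, β i) * φ U x := by
  classical
  set e := (finFunctionFinEquiv : (Fin r₀ → Fin 2) ≃ Fin (2 ^ r₀)) with he
  have key : ∀ (v : Fin r₀ → Fin 2) (b : Fin r₀),
      (Nat.testBit ((e v : Fin (2^r₀)) : ℕ) (b : ℕ)).toNat = ((v b : ℕ)) := by
    intro v b
    have hv : v b = e.symm (e v) b := by rw [Equiv.symm_apply_apply]
    have hs : ((e.symm (e v) b : Fin 2) : ℕ) = ((e v : Fin (2^r₀)) : ℕ) / 2 ^ (b:ℕ) % 2 := rfl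
    have hvb : ((v b : Fin 2) : ℕ) = ((e v : Fin (2^r₀)) : ℕ) / 2 ^ (b:ℕ) % 2 := by
      conv_lhs => rw [hv]
      exact hs
    rw [Nat.testBit_eq_decide_div_mod_eq, hvb]
    rcases Nat.mod_two_eq_zero_or_one (((e v : Fin (2^r₀)) : ℕ) / 2 ^ (b:ℕ)) with hm | hm <;>
      rw [hm] <;> simp
  -- Step 1: reindex the z-sum to a sum over v : Fin r₀ → Fin 2
  have step1 : ∑ z ∈ Finset.range (2 ^ r₀), (-1 : ℝ) ^ ((Nat.digits 2 z).sum)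
        * f (fun i => if β i = (-1 : ℝ) ^ (Nat.testBit z (h i)).toNat then x i else 0)
      = ∑ v : Fin r₀ → Fin 2,
          (∏ b : Fin r₀, (-1:ℝ)^((v b : ℕ)))
            * f (fun i => if β i = (-1:ℝ)^((v (h i) : ℕ)) then x i else 0) := by
    rw [Finset.sum_range]
    rw [← Equiv.sum_comp e (fun z : Fin (2^r₀) =>
      (-1 : ℝ) ^ ((Nat.digits 2 (z : ℕ)).sum)
        * f (fun i => if β i = (-1 : ℝ) ^ (Nat.testBit (z:ℕ) (h i)).toNat then x i else 0))]
    apply Finset.sum_congr rfl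
    intro v _
    have hsign : (-1 : ℝ) ^ ((Nat.digits 2 ((e v : Fin (2^r₀)) : ℕ)).sum)
        = ∏ b : Fin r₀, (-1:ℝ)^((v b : ℕ)) := by
      rw [aux_digitsum r₀ _ (e v).isLt]
      rw [← Finset.prod_pow_eq_pow_sum]
      rw [Finset.prod_range (fun b => (-1:ℝ) ^ (Nat.testBit ((e v : Fin (2^r₀)) : ℕ) b).toNat)]
      apply Finset.prod_congr rfl
      intro b _
      rw [key v b]
    have hpt : (fun i => if β i = (-1 : ℝ) ^ (Nat.testBit ((e v : Fin (2^r₀)):ℕ) (h i)).toNat then x i else 0)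
        = (fun i => if β i = (-1:ℝ)^((v (h i) : ℕ)) then x i else 0) := by
      funext i
      rw [key v (h i)]
    rw [hsign, hpt]
  rw [step1]
  -- Step 2: expand f and separate
  have step2 : ∀ v : Fin r₀ → Fin 2,
      (∏ b : Fin r₀, (-1:ℝ)^((v b : ℕ)))
          * f (fun i => if β i = (-1:ℝ)^((v (h i) : ℕ)) then x i else 0)
      = (∏ b : Fin r₀, (-1:ℝ)^((v b : ℕ))) * μ
        + ∑ U ∈ F, (∏ b : Fin r₀, (-1:ℝ)^((v b : ℕ)))
            * φ U (fun i => if β i = (-1:ℝ)^((v (h i) : ℕ)) then x i else 0) := by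
    intro v
    rw [hf, mul_add, Finset.mul_sum]
  simp only [step2]
  rw [Finset.sum_add_distrib]
  have hzero : ∑ v : Fin r₀ → Fin 2, (∏ b : Fin r₀, (-1:ℝ)^((v b : ℕ))) * μ = 0 := by
    rw [← Finset.sum_mul]
    have : ∑ v : Fin r₀ → Fin 2, (∏ b : Fin r₀, (-1:ℝ)^((v b : ℕ))) = 0 := by
      have hps := Finset.prod_univ_sum (fun _ : Fin r₀ => (Finset.univ : Finset (Fin 2)))
        (fun _ t => (-1:ℝ)^((t : ℕ)))
      rw [Fintype.piFinset_univ] at hps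
      rw [← hps]
      have h2 : ∑ t : Fin 2, (-1:ℝ)^((t : ℕ)) = 0 := by
        rw [Fin.sum_univ_two]; norm_num
      rw [Finset.prod_congr rfl (fun b _ => h2), Finset.prod_const, Finset.card_univ,
        Fintype.card_fin]
      exact zero_pow (by omega)
    rw [this, zero_mul]
  rw [hzero, zero_add, Finset.sum_comm]
  have step3 : ∀ U ∈ F,
      (∑ v : Fin r₀ → Fin 2, (∏ b : Fin r₀, (-1:ℝ)^((v b : ℕ)))
          * φ U (fun i => if β i = (-1:ℝ)^((v (h i) : ℕ)) then x i else 0))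
      = if U.card = r₀ ∧ (∀ a ∈ U, ∀ b ∈ U, h a = h b → a = b)
          then (∏ i ∈ U, β i) * φ U x else 0 := by
    intro U hU
    exact aux_comp U h β x hβ (φ U) (hdep U hU) (hanchor U hU) (horder U hU)
  rw [Finset.sum_congr rfl step3, Finset.sum_filter]
end

section
/- Suppose each active univariate component $\phi_p$ ($p \in S_1$) of a sparse additive model is Hölder continuous with constant $L>0$ and exponent $\alpha \in (0,1]$, and satisfies $|\phi_p(x_p^*)| > D_1$ for some $x_p^* \in [-1,1]$. Let $\widehat{z}: \{-1,-\frac{m-1}{m},\dots,\frac{m-1}{m},1\} \to \mathbb{R}^d$ be estimates satisfying $|\widehat{z}_p(x) - \phi_p(x)| \leq \epsilon$ for all grid points $x$ and all $p$ (with $\phi_q \equiv 0$ for $q \notin S_1$). If $\epsilon < D_1/3$ and $m \geq (3L/D_1)^{1/\alpha}$, then $\{p : \exists x \text{ in the grid with } |\widehat{z}_p(x)| > \epsilon\} = S_1$. -/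
/-- Thresholding recovery of the univariate support (Lemma 3.1).  If the active
components `φ_p`, `p ∈ S₁`, are `(L,α)`-Hölder on `[-1,1]` and each exceeds `D₁`
somewhere, inactive components vanish, the estimates `zhat` are `ε`-accurate on the
uniform grid `{k/m : |k| ≤ m}`, `ε < D₁/3` and `m ≥ (3L/D₁)^{1/α}`, then
thresholding at `ε` recovers `S₁` exactly. -/
theorem stmt12 (d : ℕ) (S₁ : Finset (Fin d)) (φ : Fin d → ℝ → ℝ)
    (L D₁ ε α : ℝ) (hL : 0 < L) (hD₁ : 0 < D₁) (hα₁ : 0 < α) (hα₂ : α ≤ 1)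
    (m : ℕ) (hm : (3 * L / D₁) ^ (1 / α) ≤ (m : ℝ))
    (zhat : ℝ → Fin d → ℝ)
    (hHolder : ∀ p ∈ S₁, ∀ x ∈ Set.Icc (-1 : ℝ) 1, ∀ y ∈ Set.Icc (-1 : ℝ) 1,
      |φ p x - φ p y| ≤ L * |x - y| ^ α)
    (hident : ∀ p ∈ S₁, ∃ xs ∈ Set.Icc (-1 : ℝ) 1, D₁ < |φ p xs|)
    (hinactive : ∀ q, q ∉ S₁ → ∀ x : ℝ, φ q x = 0)
    (hacc : ∀ k ∈ Finset.Icc (-(m : ℤ)) (m : ℤ), ∀ p : Fin d,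
      |zhat ((k : ℝ) / (m : ℝ)) p - φ p ((k : ℝ) / (m : ℝ))| ≤ ε)
    (hε : ε < D₁ / 3) :
    ∀ p : Fin d,
      (∃ k ∈ Finset.Icc (-(m : ℤ)) (m : ℤ), ε < |zhat ((k : ℝ) / (m : ℝ)) p|) ↔ p ∈ S₁ := by
  have hmpos : (0:ℝ) < m :=
    lt_of_lt_of_le (Real.rpow_pos_of_pos (by positivity) _) hm
  intro p
  have h0mem : (0:ℤ) ∈ Finset.Icc (-(m:ℤ)) (m:ℤ) := by
    simp
  have hε0 : 0 ≤ ε := le_trans (abs_nonneg _) (hacc 0 h0mem p)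
  constructor
  · rintro ⟨k, hk, hkε⟩
    by_contra hp
    have h := hacc k hk p
    rw [hinactive p hp, sub_zero] at h
    linarith
  · intro hp
    obtain ⟨xs, hxs, hxsD⟩ := hident p hp
    obtain ⟨hxs1, hxs2⟩ := hxs
    set k : ℤ := ⌈(m:ℝ) * xs⌉ with hkdef
    have hk1 : -(m:ℤ) ≤ k := by
      have : ((-(m:ℤ) : ℤ) : ℝ) ≤ (m:ℝ) * xs := by
        push_cast; nlinarith
      calc -(m:ℤ) = ⌈((-(m:ℤ):ℤ):ℝ)⌉ := by rw [Int.ceil_intCast]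
        _ ≤ k := Int.ceil_mono this
    have hk2 : k ≤ (m:ℤ) := Int.ceil_le.mpr (by push_cast; nlinarith)
    have hkmem : k ∈ Finset.Icc (-(m:ℤ)) (m:ℤ) := Finset.mem_Icc.mpr ⟨hk1, hk2⟩
    have hceil1 : (m:ℝ) * xs ≤ (k:ℝ) := Int.le_ceil _
    have hceil2 : (k:ℝ) < (m:ℝ) * xs + 1 := Int.ceil_lt_add_one _
    have hdist : |xs - (k:ℝ)/(m:ℝ)| ≤ 1/(m:ℝ) := by
      have e1 : xs - (k:ℝ)/(m:ℝ) = ((m:ℝ)*xs - k)/(m:ℝ) := by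
        field_simp
      rw [e1, abs_div, abs_of_pos hmpos]
      gcongr
      rw [abs_le]
      constructor <;> linarith
    have hkm : (k:ℝ)/(m:ℝ) ∈ Set.Icc (-1:ℝ) 1 := by
      constructor
      · rw [le_div_iff₀ hmpos]
        have : ((-(m:ℤ):ℤ):ℝ) ≤ (k:ℝ) := by exact_mod_cast hk1
        push_cast at this; linarith
      · rw [div_le_iff₀ hmpos]
        have : (k:ℝ) ≤ ((m:ℤ):ℝ) := by exact_mod_cast hk2
        push_cast at this; linarith
    -- Hölder bound
    have hH := hHolder p hp xs ⟨hxs1, hxs2⟩ ((k:ℝ)/(m:ℝ)) hkm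
    have hA : (3*L/D₁ : ℝ) ≤ (m:ℝ) ^ α := by
      have h1 : ((3*L/D₁) ^ (1/α)) ^ α ≤ (m:ℝ) ^ α :=
        Real.rpow_le_rpow (Real.rpow_nonneg (by positivity) _) hm hα₁.le
      rwa [← Real.rpow_mul (by positivity), one_div_mul_cancel (ne_of_gt hα₁),
        Real.rpow_one] at h1
    have hApos : (0:ℝ) < (m:ℝ) ^ α := Real.rpow_pos_of_pos hmpos _
    have hbase : |xs - (k:ℝ)/(m:ℝ)| ^ α ≤ (1/(m:ℝ)) ^ α :=
      Real.rpow_le_rpow (abs_nonneg _) hdist hα₁.le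
    have hinv : (1/(m:ℝ)) ^ α = ((m:ℝ) ^ α)⁻¹ := by
      rw [one_div, Real.inv_rpow hmpos.le]
    have h3L : 3*L ≤ D₁ * ((m:ℝ)^α) := by
      rw [div_le_iff₀ hD₁] at hA; linarith
    have hLbound : L * (1/(m:ℝ)) ^ α ≤ D₁ / 3 := by
      rw [hinv, ← div_eq_mul_inv, div_le_div_iff₀ hApos (by norm_num : (0:ℝ) < 3)]
      nlinarith
    have hφclose : |φ p xs - φ p ((k:ℝ)/(m:ℝ))| ≤ D₁/3 := by
      calc |φ p xs - φ p ((k:ℝ)/(m:ℝ))| ≤ L * |xs - (k:ℝ)/(m:ℝ)| ^ α := hH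
        _ ≤ L * (1/(m:ℝ)) ^ α := by nlinarith
        _ ≤ D₁/3 := hLbound
    have hφbig : D₁ - D₁/3 < |φ p ((k:ℝ)/(m:ℝ))| := by
      have := abs_sub_abs_le_abs_sub (φ p xs) (φ p ((k:ℝ)/(m:ℝ)))
      linarith
    refine ⟨k, hkmem, ?_⟩
    have hz := hacc k hkmem p
    have := abs_sub_abs_le_abs_sub (φ p ((k:ℝ)/(m:ℝ))) (zhat ((k:ℝ)/(m:ℝ)) p)
    rw [abs_sub_comm] at this
    linarith
end
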